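/- Define G(x,y) = (x + 2y)/(x(1+x²)) - 1/(y-x)² for distinct nonzero reals x, y. Then G(x,y) = lim_{ε→0} (f'_{x,ε}(y) - 1)/ε², where f_{x,ε}(z) = b(g_{x,ε}(z) - c)/(b² + (c-a)(g_{x,ε}(z) - a)) with g_{x,ε}(z) = z + ε²/(z-x), a = Re g_{x,ε}(i), b = Im g_{x,ε}(i), c = g_{x,ε}(0). -/

import Mathlib

open Complex Filter

/-- The map `g_{x,ε}(z) = z + ε²/(z - x)`. -/
noncomputable def gMap (x ε : ℝ) (z : ℂ) : ℂ := z + (ε : ℂ)^2 / (z - x)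

/-- The normalized conformal map `f_{x,ε}` from `ℍ \ B̄(x,ε)` onto `ℍ` fixing `0` and `i`. -/
noncomputable def fMap (x ε : ℝ) (z : ℂ) : ℂ :=
  let a : ℂ := ((gMap x ε Complex.I).re : ℝ)
  let b : ℂ := ((gMap x ε Complex.I).im : ℝ)
  let c : ℂ := gMap x ε 0
  b * (gMap x ε z - c) / (b^2 + (c - a) * (gMap x ε z - a))

namespace FMapAux

lemma h1x (x : ℝ) : (1 + (x:ℂ)^2) ≠ 0 := by
  have h : ((1 + x^2 : ℝ) : ℂ) ≠ 0 := Complex.ofReal_ne_zero.mpr (by positivity)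
  push_cast at h; exact h

lemma hIX (x : ℝ) : Complex.I - (x:ℂ) ≠ 0 := by
  intro h
  have := congrArg Complex.im h
  simp at this

lemma gI (x ε : ℝ) : gMap x ε Complex.I =
    ((-(ε^2*x)/(1+x^2) : ℝ) : ℂ) + ((1 - ε^2/(1+x^2) : ℝ) : ℂ) * Complex.I := by
  have h1 : (1:ℝ) + x^2 ≠ 0 := by positivity
  unfold gMap
  push_cast
  field_simp [hIX x, h1x x]
  linear_combination (ε:ℂ)^2 * Complex.I_sq

noncomputable def Af (x : ℝ) (t : ℂ) : ℂ := -(t * x) / (1 + (x:ℂ)^2)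
noncomputable def Bf (x : ℝ) (t : ℂ) : ℂ := 1 - t / (1 + (x:ℂ)^2)
noncomputable def Cf (x : ℝ) (t : ℂ) : ℂ := -t / (x:ℂ)
noncomputable def Df (x y : ℝ) (t : ℂ) : ℂ :=
  (Bf x t)^2 + (Cf x t - Af x t) * ((y:ℂ) + t/((y:ℂ)-(x:ℂ)) - Af x t)
noncomputable def Nf (x y : ℝ) (t : ℂ) : ℂ :=
  (1 - t/((y:ℂ)-(x:ℂ))^2) * Bf x t * ((Bf x t)^2 + (Cf x t - Af x t)^2) - (Df x y t)^2

lemma hra (x ε : ℝ) : (((gMap x ε Complex.I).re : ℝ) : ℂ) = Af x ((ε:ℂ)^2) := by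
  have hre : (gMap x ε Complex.I).re = -(ε^2*x)/(1+x^2) := by
    rw [gI x ε]
    simp only [Complex.add_re, Complex.mul_re, Complex.ofReal_re, Complex.ofReal_im,
      Complex.I_re, Complex.I_im]
    ring
  rw [hre]; unfold Af; push_cast; ring

lemma hrb (x ε : ℝ) : (((gMap x ε Complex.I).im : ℝ) : ℂ) = Bf x ((ε:ℂ)^2) := by
  have him : (gMap x ε Complex.I).im = 1 - ε^2/(1+x^2) := by
    rw [gI x ε]
    simp only [Complex.add_im, Complex.mul_im, Complex.ofReal_re, Complex.ofReal_im,
      Complex.I_re, Complex.I_im]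
    ring
  rw [him]; unfold Bf; push_cast; ring

lemma hc (x ε : ℝ) (hx : x ≠ 0) : gMap x ε 0 = Cf x ((ε:ℂ)^2) := by
  have hX : (x:ℂ) ≠ 0 := Complex.ofReal_ne_zero.mpr hx
  unfold gMap Cf
  field_simp
  ring

lemma deriv_fMap (x y ε : ℝ) (hx : x ≠ 0) (hxy : y ≠ x) (hD : Df x y ((ε:ℂ)^2) ≠ 0) :
    deriv (fMap x ε) (y:ℂ) =
      (1 - (ε:ℂ)^2/((y:ℂ)-(x:ℂ))^2) * Bf x ((ε:ℂ)^2) *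
        ((Bf x ((ε:ℂ)^2))^2 + (Cf x ((ε:ℂ)^2) - Af x ((ε:ℂ)^2))^2) / (Df x y ((ε:ℂ)^2))^2 := by
  set t : ℂ := (ε:ℂ)^2 with ht
  have hYX : (y:ℂ) - (x:ℂ) ≠ 0 := by
    intro h
    exact hxy (by exact_mod_cast sub_eq_zero.mp h)
  have hX : (x:ℂ) ≠ 0 := Complex.ofReal_ne_zero.mpr hx
  have h1X := h1x x
  have hsub : HasDerivAt (fun z : ℂ => z - (x:ℂ)) 1 (y:ℂ) := (hasDerivAt_id _).sub_const _
  have hg : HasDerivAt (gMap x ε) (1 - t/((y:ℂ)-(x:ℂ))^2) (y:ℂ) := by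
    have h2 := (hasDerivAt_const (y:ℂ) t).div hsub hYX
    have h3 := (hasDerivAt_id (y:ℂ)).add h2
    convert h3 using 1
    · rfl
    · rfl
    · funext z; rfl
    ring
  have hfe : fMap x ε = fun z => Bf x t * (gMap x ε z - Cf x t) /
      ((Bf x t)^2 + (Cf x t - Af x t) * (gMap x ε z - Af x t)) := by
    funext z
    unfold fMap
    rw [hra, hrb, hc x ε hx]
  have hu : HasDerivAt (fun z => Bf x t * (gMap x ε z - Cf x t))
      (Bf x t * (1 - t/((y:ℂ)-(x:ℂ))^2)) (y:ℂ) := (hg.sub_const _).const_mul _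
  have hv : HasDerivAt (fun z => (Bf x t)^2 + (Cf x t - Af x t) * (gMap x ε z - Af x t))
      ((Cf x t - Af x t) * (1 - t/((y:ℂ)-(x:ℂ))^2)) (y:ℂ) :=
    ((hg.sub_const _).const_mul _).const_add _
  have hvY : (Bf x t)^2 + (Cf x t - Af x t) * (gMap x ε (y:ℂ) - Af x t) = Df x y t := by
    simp [Df, gMap, ht]
  have hvD : (Bf x t)^2 + (Cf x t - Af x t) * (gMap x ε (y:ℂ) - Af x t) ≠ 0 := by
    rw [hvY]; exact hD
  have hder := (hu.div hv hvD).deriv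
  simp only [Pi.div_def] at hder
  rw [hfe, hder, ← hvY]
  rw [div_eq_div_iff (pow_ne_zero 2 hvD) (pow_ne_zero 2 hvD)]
  ring

lemma Nf_zero (x y : ℝ) : Nf x y 0 = 0 := by
  simp [Nf, Df, Af, Bf, Cf]

lemma Nf_hasDeriv (x y : ℝ) (hx : x ≠ 0) (hxy : y ≠ x) :
    HasDerivAt (Nf x y) (((x + 2*y) / (x * (1 + x^2)) - 1 / (y - x)^2 : ℝ) : ℂ) 0 := by
  have hYX : (y:ℂ) - (x:ℂ) ≠ 0 := by
    intro h; exact hxy (by exact_mod_cast sub_eq_zero.mp h)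
  have hX : (x:ℂ) ≠ 0 := Complex.ofReal_ne_zero.mpr hx
  have h1X := h1x x
  have hA : HasDerivAt (Af x) (-(1 * (x:ℂ)) / (1+(x:ℂ)^2)) 0 :=
    ((hasDerivAt_id _).mul_const _).neg.div_const _
  have hB : HasDerivAt (Bf x) (-(1 / (1+(x:ℂ)^2))) 0 :=
    ((hasDerivAt_id _).div_const _).const_sub _
  have hC : HasDerivAt (Cf x) (-1 / (x:ℂ)) 0 :=
    (hasDerivAt_id _).neg.div_const _
  have hG : HasDerivAt (fun t:ℂ => (y:ℂ) + t/((y:ℂ)-(x:ℂ))) (1/((y:ℂ)-(x:ℂ))) 0 :=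
    ((hasDerivAt_id _).div_const _).const_add _
  have hp1 : HasDerivAt (fun t:ℂ => 1 - t/((y:ℂ)-(x:ℂ))^2) (-(1/((y:ℂ)-(x:ℂ))^2)) 0 :=
    ((hasDerivAt_id _).div_const _).const_sub _
  have hGA := hG.sub hA
  have hCA := hC.sub hA
  have hDf := (hB.pow 2).add (hCA.mul hGA)
  have hN' := ((hp1.mul hB).mul ((hB.pow 2).add (hCA.pow 2))).sub (hDf.pow 2)
  convert hN' using 1
  · rfl
  · rfl
  · funext t; rfl
  simp only [Pi.add_apply, Pi.sub_apply, Pi.mul_apply, Pi.pow_apply, Af, Bf, Cf]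
  push_cast
  norm_num
  field_simp [hX, hYX, h1X]
  ring

end FMapAux

/-- `G(x,y) = lim_{ε→0} (f'_{x,ε}(y) - 1)/ε²` with
`G(x,y) = (x+2y)/(x(1+x²)) - 1/(y-x)²`. -/
theorem fMap_derivative_expansion (x y : ℝ) (hx : x ≠ 0) (hy : y ≠ 0) (hxy : y ≠ x) :
    Tendsto (fun ε : ℝ => (deriv (fMap x ε) (y : ℂ) - 1) / (ε : ℂ)^2)
      (nhdsWithin 0 (Set.Ioi 0))
      (nhds (((x + 2*y) / (x * (1 + x^2)) - 1 / (y - x)^2 : ℝ) : ℂ)) := by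
  set L : ℂ := (((x + 2*y) / (x * (1 + x^2)) - 1 / (y - x)^2 : ℝ) : ℂ) with hL
  have hYX : (y:ℂ) - (x:ℂ) ≠ 0 := by
    intro h; exact hxy (by exact_mod_cast sub_eq_zero.mp h)
  have hX : (x:ℂ) ≠ 0 := Complex.ofReal_ne_zero.mpr hx
  have h1X := FMapAux.h1x x
  -- slope limit
  have h1 : Tendsto (fun t : ℂ => FMapAux.Nf x y t / t) (nhdsWithin 0 {(0:ℂ)}ᶜ) (nhds L) := by
    have hs := hasDerivAt_iff_tendsto_slope.mp (FMapAux.Nf_hasDeriv x y hx hxy)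
    apply hs.congr
    intro t
    rw [slope_def_field, FMapAux.Nf_zero]
    simp
  have hDcont : Continuous fun t : ℂ => FMapAux.Df x y t := by
    unfold FMapAux.Df FMapAux.Af FMapAux.Bf FMapAux.Cf
    fun_prop
  have hD0 : FMapAux.Df x y 0 = 1 := by simp [FMapAux.Df, FMapAux.Af, FMapAux.Bf, FMapAux.Cf]
  have hDt : Tendsto (fun t : ℂ => FMapAux.Df x y t) (nhdsWithin (0:ℂ) {(0:ℂ)}ᶜ) (nhds 1) := by
    have := (hDcont.tendsto 0).mono_left (nhdsWithin_le_nhds (s := {(0:ℂ)}ᶜ))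
    rwa [hD0] at this
  have h2 : Tendsto (fun t : ℂ => (FMapAux.Df x y t)^2) (nhdsWithin 0 {(0:ℂ)}ᶜ) (nhds 1) := by
    simpa using hDt.pow 2
  have key : Tendsto (fun t : ℂ => (FMapAux.Nf x y t / t) / (FMapAux.Df x y t)^2)
      (nhdsWithin 0 {(0:ℂ)}ᶜ) (nhds L) := by
    simpa [Pi.div_def] using h1.div h2 one_ne_zero
  -- squaring map
  have hsq : Tendsto (fun ε : ℝ => ((ε:ℂ))^2) (nhdsWithin 0 (Set.Ioi 0))
      (nhdsWithin 0 {(0:ℂ)}ᶜ) := by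
    rw [tendsto_nhdsWithin_iff]
    constructor
    · have := ((continuous_ofReal.pow 2).tendsto 0).mono_left
        (nhdsWithin_le_nhds (s := Set.Ioi (0:ℝ)))
      simpa [Pi.pow_def] using this
    · filter_upwards [self_mem_nhdsWithin] with ε hε
      exact pow_ne_zero 2 (Complex.ofReal_ne_zero.mpr (ne_of_gt hε))
  have main := key.comp hsq
  have hDev : ∀ᶠ ε : ℝ in nhdsWithin 0 (Set.Ioi 0), FMapAux.Df x y ((ε:ℂ)^2) ≠ 0 := by
    have htend : Tendsto (fun ε : ℝ => FMapAux.Df x y ((ε:ℂ)^2)) (nhdsWithin 0 (Set.Ioi 0)) (nhds 1) := by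
      have := (hDcont.tendsto 0).comp (hsq.mono_right nhdsWithin_le_nhds)
      simpa [hD0, Function.comp_def] using this
    exact htend.eventually_ne one_ne_zero
  apply main.congr'
  filter_upwards [hDev, self_mem_nhdsWithin] with ε hD hε
  have ht2 : ((ε:ℂ))^2 ≠ 0 := pow_ne_zero 2 (Complex.ofReal_ne_zero.mpr (ne_of_gt hε))
  rw [FMapAux.deriv_fMap x y ε hx hxy hD]
  unfold FMapAux.Nf
  simp only [Function.comp_apply]
  field_simp [hD, ht2, hYX]
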